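/- arXiv:2012.15237 — 2 statements merged into one kernel-verified Lean document; each statement's English description precedes it below -/
import Mathlib

section
/- Let S(y,y') = |q(y)-q(y')| for an arclength-parametrized planar curve q. If |⟨d_y q(y), ρ(y,y')⟩| ≤ 1/C and |⟨d_{y'} q(y'), ρ(y,y')⟩| ≤ 1/C for some C > 1 (transversality at both endpoints), and |q(y)-q(y')| ≤ L, then |∂_y ∂_{y'} S(y,y')| ≥ (1 - 1/C²)/L > 0. -/
open scoped RealInnerProductSpace

lemma hasDerivAt_norm_aux {F : Type*} [NormedAddCommGroup F] [InnerProductSpace ℝ F]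
    {f : ℝ → F} {f' : F} {x : ℝ}
    (hf : HasDerivAt f f' x) (hx : f x ≠ 0) :
    HasDerivAt (fun t => ‖f t‖) (⟪f x, f'⟫ / ‖f x‖) x := by
  have h1 : HasDerivAt (fun t => ‖f t‖ ^ 2) (2 * ⟪f x, f'⟫) x := hf.norm_sq
  have h2 := h1.sqrt (pow_ne_zero 2 (norm_ne_zero_iff.mpr hx))
  have h3 : (fun t => Real.sqrt (‖f t‖ ^ 2)) = fun t => ‖f t‖ := by
    funext t; rw [Real.sqrt_sq (norm_nonneg _)]
  rw [h3] at h2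
  convert h2 using 1
  rw [Real.sqrt_sq (norm_nonneg _)]
  ring

lemma planar_aux (u v r : EuclideanSpace ℝ (Fin 2))
    (hu : ‖u‖ = 1) (hv : ‖v‖ = 1) (hr : ‖r‖ = 1) (C : ℝ) (hC : 1 < C)
    (hs : |⟪u, r⟫| ≤ 1 / C) (ht : |⟪v, r⟫| ≤ 1 / C) :
    1 - 1 / C ^ 2 ≤ |⟪u, v⟫ - ⟪u, r⟫ * ⟪v, r⟫| := by
  have hC0 : (0:ℝ) < C := by linarith
  have hu2 : u 0 ^ 2 + u 1 ^ 2 = 1 := by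
    have h := real_inner_self_eq_norm_sq u
    simp only [PiLp.inner_apply, RCLike.inner_apply, conj_trivial, Fin.sum_univ_two, hu] at h
    linear_combination h
  have hv2 : v 0 ^ 2 + v 1 ^ 2 = 1 := by
    have h := real_inner_self_eq_norm_sq v
    simp only [PiLp.inner_apply, RCLike.inner_apply, conj_trivial, Fin.sum_univ_two, hv] at h
    linear_combination h
  have hr2 : r 0 ^ 2 + r 1 ^ 2 = 1 := by
    have h := real_inner_self_eq_norm_sq r
    simp only [PiLp.inner_apply, RCLike.inner_apply, conj_trivial, Fin.sum_univ_two, hr] at h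
    linear_combination h
  have hsu : ⟪u, r⟫ = u 0 * r 0 + u 1 * r 1 := by
    simp [PiLp.inner_apply, RCLike.inner_apply, Fin.sum_univ_two]; ring
  have hsv : ⟪v, r⟫ = v 0 * r 0 + v 1 * r 1 := by
    simp [PiLp.inner_apply, RCLike.inner_apply, Fin.sum_univ_two]; ring
  have huv : ⟪u, v⟫ = u 0 * v 0 + u 1 * v 1 := by
    simp [PiLp.inner_apply, RCLike.inner_apply, Fin.sum_univ_two]; ring
  set X := ⟪u, v⟫ - ⟪u, r⟫ * ⟪v, r⟫ with hX
  set a := u 1 * r 0 - u 0 * r 1 with ha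
  set b := v 1 * r 0 - v 0 * r 1 with hb
  have hXab : X = a * b := by
    rw [hX, huv, hsu, hsv, ha, hb]; linear_combination (-(u 0 * v 0 + u 1 * v 1)) * hr2
  have ha2 : a ^ 2 = 1 - ⟪u, r⟫ ^ 2 := by
    rw [ha, hsu]; linear_combination (r 0 ^ 2 + r 1 ^ 2) * hu2 + hr2
  have hb2 : b ^ 2 = 1 - ⟪v, r⟫ ^ 2 := by
    rw [hb, hsv]; linear_combination (r 0 ^ 2 + r 1 ^ 2) * hv2 + hr2
  have h1 : (1:ℝ) - 1 / C ^ 2 ≥ 0 := by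
    have : 1 / C ^ 2 ≤ 1 := by
      rw [div_le_one (by positivity)]; nlinarith
    linarith
  have hs2 : ⟪u, r⟫ ^ 2 ≤ 1 / C ^ 2 := by
    have h2 := pow_le_pow_left₀ (abs_nonneg _) hs 2
    rw [sq_abs] at h2
    calc ⟪u, r⟫ ^ 2 ≤ (1 / C) ^ 2 := h2
      _ = 1 / C ^ 2 := by ring
  have ht2 : ⟪v, r⟫ ^ 2 ≤ 1 / C ^ 2 := by
    have h2 := pow_le_pow_left₀ (abs_nonneg _) ht 2
    rw [sq_abs] at h2
    calc ⟪v, r⟫ ^ 2 ≤ (1 / C) ^ 2 := h2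
      _ = 1 / C ^ 2 := by ring
  have hX2 : (1 - 1 / C ^ 2) ^ 2 ≤ X ^ 2 := by
    have hXe : X ^ 2 = (1 - ⟪u, r⟫ ^ 2) * (1 - ⟪v, r⟫ ^ 2) := by
      rw [hXab, mul_pow, ha2, hb2]
    rw [hXe, sq]
    apply mul_le_mul (by linarith) (by linarith) h1 (by linarith)
  have habs : (1 - 1 / C ^ 2) ^ 2 ≤ |X| ^ 2 := by rwa [sq_abs]
  exact (pow_le_pow_iff_left₀ h1 (abs_nonneg X) two_ne_zero).mp habs

/-- If an arclength-parametrized planar curve is uniformly transversal to the chord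
direction ρ at both endpoints (inner products at most 1/C, C > 1) and the chord has
length at most L, then the mixed second derivative of S(y,y') = ‖q y - q y'‖ is
bounded below by (1 - 1/C²)/L. -/
theorem stmt1 (q : ℝ → EuclideanSpace ℝ (Fin 2))
    (hq : ContDiff ℝ 2 q) (harc : ∀ y, ‖deriv q y‖ = 1)
    (C L : ℝ) (hC : 1 < C) (hL : 0 < L)
    (y y' : ℝ) (hne : q y ≠ q y')
    (hlen : ‖q y - q y'‖ ≤ L)
    (htr : |⟪deriv q y, (‖q y - q y'‖)⁻¹ • (q y - q y')⟫| ≤ 1 / C)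
    (htr' : |⟪deriv q y', (‖q y - q y'‖)⁻¹ • (q y - q y')⟫| ≤ 1 / C) :
    (1 - 1 / C ^ 2) / L ≤ |deriv (fun a => deriv (fun b => ‖q a - q b‖) y') y| := by
  have hqd : Differentiable ℝ q := hq.differentiable (by norm_num)
  set u := deriv q y with hu
  set v := deriv q y' with hv
  set d : EuclideanSpace ℝ (Fin 2) := q y - q y' with hd
  set S := ‖q y - q y'‖ with hSdef
  have hS0 : 0 < S := norm_pos_iff.mpr (sub_ne_zero.mpr hne)
  -- inner derivative formula near y
  have hev : (fun a => deriv (fun b => ‖q a - q b‖) y') =ᶠ[nhds y]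
      (fun a => ⟪q a - q y', -v⟫ / ‖q a - q y'‖) := by
    have hne' : ∀ᶠ a in nhds y, q a ≠ q y' :=
      (hqd.continuous.continuousAt).eventually_ne hne
    filter_upwards [hne'] with a ha
    have hsub : HasDerivAt (fun b => q a - q b) (-v) y' := by
      simpa using ((hqd y').hasDerivAt).const_sub (q a)
    exact (hasDerivAt_norm_aux hsub (sub_ne_zero.mpr ha)).deriv
  rw [hev.deriv_eq]
  -- compute derivative at y
  have h1 : HasDerivAt (fun a => q a - q y') u y := ((hqd y).hasDerivAt).sub_const _
  have hN : HasDerivAt (fun a => ⟪q a - q y', -v⟫) ⟪u, -v⟫ y := by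
    have := h1.inner ℝ (hasDerivAt_const y (-v))
    simpa using this
  have hD : HasDerivAt (fun a => ‖q a - q y'‖) (⟪d, u⟫ / S) y :=
    hasDerivAt_norm_aux h1 (sub_ne_zero.mpr hne)
  have hg := hN.div hD hS0.ne'
  rw [show (fun a => ⟪q a - q y', -v⟫ / ‖q a - q y'‖) = ((fun a => ⟪q a - q y', -v⟫) / fun a => ‖q a - q y'‖) from rfl, hg.deriv, ← hSdef, ← hd]
  -- rewrite in terms of rho
  set r : EuclideanSpace ℝ (Fin 2) := S⁻¹ • d with hr
  have hrnorm : ‖r‖ = 1 := by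
    rw [hr, norm_smul]
    simp [hSdef, abs_of_pos hS0]
    field_simp
    exact div_self hS0.ne'
  have hur : ⟪u, r⟫ = ⟪u, d⟫ / S := by
    rw [hr, real_inner_smul_right]; ring
  have hvr : ⟪v, r⟫ = ⟪v, d⟫ / S := by
    rw [hr, real_inner_smul_right]; ring
  have key := planar_aux u v r (harc y) (harc y') hrnorm C hC htr htr'
  have hexpr : (⟪u, -v⟫ * S - ⟪d, -v⟫ * (⟪d, u⟫ / S)) / S ^ 2
      = -((⟪u, v⟫ - ⟪u, r⟫ * ⟪v, r⟫) / S) := by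
    rw [hur, hvr, inner_neg_right, inner_neg_right,
      real_inner_comm d v, real_inner_comm d u]
    field_simp
    ring
  rw [hexpr, abs_neg, abs_div, abs_of_pos hS0]
  have h1' : (0:ℝ) ≤ 1 - 1 / C ^ 2 := by
    have : 1 / C ^ 2 ≤ 1 := by
      rw [div_le_one (by positivity)]; nlinarith
    linarith
  gcongr
end

section
/- With S(s,t) = √((s-t)² + α²(t-1)²) as above, there exist constants C₁, C₂ > 0 (depending on α and ε₀) such that whenever 0 ≤ s ≤ 1 - h^δ and |t-1| ≤ ε₀(1-s) with ε₀ < 1 sufficiently small, one has C₁·|t-1|·(1-s)/S(s,t)³ ≤ |∂_s ∂_t S(s,t)| ≤ C₂·|t-1|·(1-s)/S(s,t)³, and moreover S(s,t) is comparable to 1-s: (1-ε₀)(1-s) ≤ S(s,t) ≤ (1+α)(1-s)·(1+ε₀). -/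
noncomputable def S3 (α s t : ℝ) : ℝ := Real.sqrt ((s - t) ^ 2 + α ^ 2 * (t - 1) ^ 2)

lemma S3_hasDerivAt_t (α s t : ℝ) (hpos : 0 < (s - t) ^ 2 + α ^ 2 * (t - 1) ^ 2) :
    HasDerivAt (fun t' => S3 α s t')
      ((α ^ 2 * (t - 1) - (s - t)) / Real.sqrt ((s - t) ^ 2 + α ^ 2 * (t - 1) ^ 2)) t := by
  have h1 : HasDerivAt (fun t' : ℝ => (s - t') ^ 2 + α ^ 2 * (t' - 1) ^ 2)
      (2 * (s - t) ^ 1 * -1 + α ^ 2 * (2 * (t - 1) ^ 1 * 1)) t := by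
    exact ((((hasDerivAt_id t).const_sub s).pow 2).add
      ((((hasDerivAt_id t).sub_const 1).pow 2).const_mul (α ^ 2)))
  have h2 := (Real.hasDerivAt_sqrt (ne_of_gt hpos)).comp t h1
  refine h2.congr_deriv ?_
  have hu : Real.sqrt ((s - t) ^ 2 + α ^ 2 * (t - 1) ^ 2) ≠ 0 :=
    ne_of_gt (Real.sqrt_pos.mpr hpos)
  rw [one_div, mul_inv]
  ring

lemma deriv_deriv_S3 (α t s : ℝ) (hpos : 0 < (s - t) ^ 2 + α ^ 2 * (t - 1) ^ 2) :
    deriv (fun s' => deriv (fun t' => S3 α s' t') t) s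
      = α ^ 2 * (t - 1) * (1 - s) / (S3 α s t) ^ 3 := by
  set F : ℝ → ℝ := fun s' =>
    (α ^ 2 * (t - 1) - (s' - t)) / Real.sqrt ((s' - t) ^ 2 + α ^ 2 * (t - 1) ^ 2) with hF
  have hU : IsOpen {s' : ℝ | 0 < (s' - t) ^ 2 + α ^ 2 * (t - 1) ^ 2} := by
    apply isOpen_lt continuous_const
    continuity
  have hEq : (fun s' => deriv (fun t' => S3 α s' t') t) =ᶠ[nhds s] F := by
    filter_upwards [hU.mem_nhds hpos] with s' hs'
    exact (S3_hasDerivAt_t α s' t hs').deriv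
  rw [hEq.deriv_eq]
  set u := Real.sqrt ((s - t) ^ 2 + α ^ 2 * (t - 1) ^ 2) with hudef
  have hu : 0 < u := Real.sqrt_pos.mpr hpos
  have hu2 : u ^ 2 = (s - t) ^ 2 + α ^ 2 * (t - 1) ^ 2 := Real.sq_sqrt hpos.le
  have hnum : HasDerivAt (fun s' : ℝ => α ^ 2 * (t - 1) - (s' - t)) (-1) s := by
    simpa using ((hasDerivAt_id s).sub_const t).const_sub (α ^ 2 * (t - 1))
  have hinner : HasDerivAt (fun s' : ℝ => (s' - t) ^ 2 + α ^ 2 * (t - 1) ^ 2)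
      (2 * (s - t) ^ 1 * 1) s := by
    have := (((hasDerivAt_id s).sub_const t).pow 2).add_const (α ^ 2 * (t - 1) ^ 2)
    simpa using this
  have hden : HasDerivAt (fun s' : ℝ => Real.sqrt ((s' - t) ^ 2 + α ^ 2 * (t - 1) ^ 2))
      (1 / (2 * u) * (2 * (s - t) ^ 1 * 1)) s :=
    (Real.hasDerivAt_sqrt (ne_of_gt hpos)).comp s hinner
  have hdiv : HasDerivAt F
      ((-1 * u - (α ^ 2 * (t - 1) - (s - t)) * (1 / (2 * u) * (2 * (s - t) ^ 1 * 1))) / u ^ 2)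
      s := hnum.div hden (ne_of_gt hu)
  rw [hdiv.deriv]
  show _ = α ^ 2 * (t - 1) * (1 - s) / u ^ 3
  field_simp
  linear_combination (-1) * hu2

set_option maxHeartbeats 1000000 in
/-- Two-sided comparison for |∂_s ∂_t S| on the near-glancing region
{0 ≤ s ≤ 1 - h^δ, |t-1| ≤ ε₀(1-s)}, together with S ≍ 1-s. -/
theorem stmt3 (α ε₀ : ℝ) (hα : 0 < α) (hε : 0 < ε₀) (hεlt : ε₀ < min 1 (1 / (2 * α))) :
    ∃ C₁ C₂ : ℝ, 0 < C₁ ∧ 0 < C₂ ∧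
      ∀ h δ s t : ℝ, 0 < h → h < 1 → 0 < δ → 0 ≤ s → s ≤ 1 - h ^ δ →
        |t - 1| ≤ ε₀ * (1 - s) →
        (C₁ * |t - 1| * (1 - s) / (S3 α s t) ^ 3 ≤
            |deriv (fun s' => deriv (fun t' => S3 α s' t') t) s| ∧
          |deriv (fun s' => deriv (fun t' => S3 α s' t') t) s| ≤
            C₂ * |t - 1| * (1 - s) / (S3 α s t) ^ 3) ∧
        ((1 - ε₀) * (1 - s) ≤ S3 α s t ∧ S3 α s t ≤ (1 + α) * (1 - s) * (1 + ε₀)) := by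
  refine ⟨α ^ 2, α ^ 2, by positivity, by positivity, ?_⟩
  intro h δ s t hh hh1 hδ hs0 hs1 ht
  have hε1 : ε₀ < 1 := (lt_min_iff.mp hεlt).1
  have hhδ : 0 < h ^ δ := Real.rpow_pos_of_pos hh δ
  have h1s : 0 < 1 - s := by linarith
  set e := |t - 1| with he
  have he0 : 0 ≤ e := abs_nonneg _
  have he2 : e ^ 2 = (t - 1) ^ 2 := sq_abs _
  have hst2 : (s - t) ^ 2 = |s - t| ^ 2 := (sq_abs _).symm
  have habs1 : (1 - s) - e ≤ |s - t| := by
    have := abs_sub_abs_le_abs_sub (s - 1) (t - 1)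
    have h2 : |s - 1| = 1 - s := by rw [abs_of_nonpos (by linarith)]; ring
    have h3 : s - 1 - (t - 1) = s - t := by ring
    rw [h2, h3] at this
    linarith
  have habs2 : |s - t| ≤ (1 - s) + e := by
    have := abs_sub (s - 1) (t - 1)
    have h2 : |s - 1| = 1 - s := by rw [abs_of_nonpos (by linarith)]; ring
    have h3 : s - 1 - (t - 1) = s - t := by ring
    rw [h2, h3] at this
    linarith
  -- lower bound for S3
  have hSlow : (1 - ε₀) * (1 - s) ≤ S3 α s t := by
    have h1 : (1 - ε₀) * (1 - s) ≤ |s - t| := by nlinarith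
    have h2 : |s - t| ≤ S3 α s t := by
      rw [← Real.sqrt_sq_eq_abs]
      exact Real.sqrt_le_sqrt (by nlinarith [sq_nonneg (α * (t - 1))])
    linarith
  have hS3pos : 0 < S3 α s t := lt_of_lt_of_le (by nlinarith) hSlow
  have hpos : 0 < (s - t) ^ 2 + α ^ 2 * (t - 1) ^ 2 := Real.sqrt_pos.mp hS3pos
  -- upper bound for S3
  have hSup : S3 α s t ≤ (1 + α) * (1 - s) * (1 + ε₀) := by
    have hB : 0 ≤ (1 + α) * (1 - s) * (1 + ε₀) := by positivity
    have h1 : (s - t) ^ 2 ≤ ((1 - s) + e) ^ 2 := by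
      rw [hst2]; exact pow_le_pow_left₀ (abs_nonneg _) habs2 2
    have h2 : ((1 - s) + e) ^ 2 ≤ ((1 - s) * (1 + ε₀)) ^ 2 := by nlinarith
    have h3 : α ^ 2 * (t - 1) ^ 2 ≤ α ^ 2 * (ε₀ * (1 - s)) ^ 2 := by
      rw [← he2]
      exact mul_le_mul_of_nonneg_left (pow_le_pow_left₀ he0 ht 2) (sq_nonneg α)
    have harg : (s - t) ^ 2 + α ^ 2 * (t - 1) ^ 2 ≤ ((1 + α) * (1 - s) * (1 + ε₀)) ^ 2 := by
      nlinarith [sq_nonneg ((1 - s) * (1 + ε₀)), sq_nonneg (1 - s), mul_nonneg hα.le hε.le,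
        sq_nonneg (α * (1 - s))]
    calc S3 α s t ≤ Real.sqrt (((1 + α) * (1 - s) * (1 + ε₀)) ^ 2) := Real.sqrt_le_sqrt harg
      _ = (1 + α) * (1 - s) * (1 + ε₀) := Real.sqrt_sq hB
  -- derivative value
  have hd : |deriv (fun s' => deriv (fun t' => S3 α s' t') t) s|
      = α ^ 2 * e * (1 - s) / (S3 α s t) ^ 3 := by
    rw [deriv_deriv_S3 α t s hpos, abs_div, abs_of_pos (pow_pos hS3pos 3), abs_mul, abs_mul,
      abs_of_nonneg (sq_nonneg α), abs_of_pos h1s]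
  exact ⟨⟨le_of_eq hd.symm, le_of_eq hd⟩, hSlow, hSup⟩
end
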